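/- Let B be a strictly associative and unital bigroupoid with double-dual comparison 2-cells u_f : f** ⟶ f as above. Then for every 1-cell f, the composite (f*** ∘ f**) ⟶ (f* ∘ f) ⟶ 1 given by (u_{f*} ∘ u_f) followed by e_f equals e_{f**} : f*** ∘ f** ⟶ 1. -/

import Mathlib

open CategoryTheory Bicategory

theorem stmt_10 {𝒷 : Type*} [Bicategory 𝒷] [Bicategory.Strict 𝒷] {A B : 𝒷}
    (f : A ⟶ B) (fs : B ⟶ A) (fss : A ⟶ B) (fsss : B ⟶ A)
    -- counits and units for f, f* and f** (invertible):
    (e_f : f ≫ fs ≅ 𝟙 A) (i_f : 𝟙 B ≅ fs ≫ f)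
    (e_fs : fs ≫ fss ≅ 𝟙 B) (i_fs : 𝟙 A ≅ fss ≫ fs)
    (e_fss : fss ≫ fsss ≅ 𝟙 A) (i_fss : 𝟙 B ≅ fsss ≫ fss)
    -- triangle identities:
    (tri_f : (f ◁ i_f.hom) ≫ (α_ f fs f).inv ≫ (e_f.hom ▷ f)
      = (ρ_ f).hom ≫ (λ_ f).inv)
    (tri_fs : (fs ◁ i_fs.hom) ≫ (α_ fs fss fs).inv ≫ (e_fs.hom ▷ fs)
      = (ρ_ fs).hom ≫ (λ_ fs).inv)
    (tri_fss : (fss ◁ i_fss.hom) ≫ (α_ fss fsss fss).inv ≫ (e_fss.hom ▷ fss)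
      = (ρ_ fss).hom ≫ (λ_ fss).inv) :
    -- with u_f : f** ⟶ f and u_{f*} : f*** ⟶ f* the double-dual comparison 2-cells:
    ∀ (u_f : fss ⟶ f) (u_fs : fsss ⟶ fs),
      u_f = (λ_ fss).inv ≫ (e_f.inv ▷ fss) ≫ (α_ f fs fss).hom ≫
        (f ◁ e_fs.hom) ≫ (ρ_ f).hom →
      u_fs = (λ_ fsss).inv ≫ (e_fs.inv ▷ fsss) ≫ (α_ fs fss fsss).hom ≫
        (fs ◁ e_fss.hom) ≫ (ρ_ fs).hom →
      (u_f ▷ fsss) ≫ (f ◁ u_fs) ≫ e_f.hom = e_fss.hom := by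
  intro u_f u_fs h1 h2
  subst h1 h2
  simp only [comp_whiskerRight, Bicategory.whiskerLeft_comp, Category.assoc,
    Bicategory.whiskerRight_comp, whiskerLeft_rightUnitor_inv, whiskerLeft_rightUnitor]
  simp [Strict.leftUnitor_eqToIso, Strict.rightUnitor_eqToIso, Strict.associator_eqToIso]
  have h3 : e_f.inv ▷ fss ▷ fsss
      = eqToHom (by simp) ≫ e_f.inv ▷ (fss ≫ fsss) ≫ eqToHom (by simp) := by
    rw [Bicategory.whiskerRight_comp]
    simp [Strict.associator_eqToIso]
  have h4 : f ◁ fs ◁ e_fss.hom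
      = eqToHom (by simp) ≫ (f ≫ fs) ◁ e_fss.hom ≫ eqToHom (by simp) := by
    rw [comp_whiskerLeft]
    simp [Strict.associator_eqToIso]
  rw [h3, h4]
  simp only [Category.assoc, eqToHom_trans, eqToHom_trans_assoc, eqToHom_refl, Category.id_comp, Category.comp_id]
  rw [← whisker_exchange_assoc]
  simp [Strict.leftUnitor_eqToIso, Strict.rightUnitor_eqToIso]
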